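/- Let 𝒜 be an n-dimensional complete abelian LSA that is not filiform. Then (λ_x)^{n-1} = 0 for every x ∈ 𝒜; consequently the associated polynomial F(x) = xᵀH(½I − ⅓λ_x + ¼λ_x² − ⋯)x has total degree at most n, hence is not the Cayley polynomial (which has degree n+1). -/
import Mathlib


open Matrix

/-- The descending series of ideals: `Apow mul 1 = ⊤` (𝒜¹ = 𝒜) and
`Apow mul (i+1) = span {a·b | b ∈ Apow mul i}` (𝒜^{i+1} = 𝒜·𝒜^i). -/
def Apow {E : Type*} [AddCommGroup E] [Module ℝ E]
    (mul : E →ₗ[ℝ] E →ₗ[ℝ] E) : ℕ → Submodule ℝ E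
  | 0 => ⊤
  | 1 => ⊤
  | (i + 2) => Submodule.span ℝ {z | ∃ a b, b ∈ Apow mul (i + 1) ∧ z = mul a b}

/-- The Cayley polynomial. -/
noncomputable def cayleyPoly (n : ℕ) (x : Fin n → ℝ) : ℝ :=
  ∑ d ∈ Finset.Icc 2 (n + 1), (-1 : ℝ) ^ d * (d : ℝ)⁻¹ *
    ∑ c ∈ Finset.univ.filter
        (fun c : Fin d → Fin n => ∑ t, ((c t : ℕ) + 1) = n + 1),
      ∏ t, x (c t)

lemma pow_mem_Apow {E : Type*} [AddCommGroup E] [Module ℝ E]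
    (mul : E →ₗ[ℝ] E →ₗ[ℝ] E) (x : E) :
    ∀ k v, (((mul x : Module.End ℝ E)) ^ k) v ∈ Apow mul (k + 1) := by
  intro k
  induction k with
  | zero => intro v; simp [Apow]
  | succ k ih =>
    intro v
    have h : ((mul x : Module.End ℝ E) ^ (k + 1)) v
        = mul x (((mul x : Module.End ℝ E) ^ k) v) := by
      rw [pow_succ']; rfl
    rw [h]
    show _ ∈ Apow mul (k + 2)
    exact Submodule.subset_span ⟨x, _, ih v, rfl⟩

lemma dot_sum_mulVec {n : ℕ} {α : Type*} (s : Finset α) (A : α → Matrix (Fin n) (Fin n) ℝ)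
    (x : Fin n → ℝ) :
    x ⬝ᵥ (∑ i ∈ s, A i).mulVec x = ∑ i ∈ s, x ⬝ᵥ (A i).mulVec x := by
  induction s using Finset.cons_induction with
  | empty => simp
  | cons i s hi ih => simp [Finset.sum_cons, Matrix.add_mulVec, dotProduct_add, ih]

lemma top_filter_card (n : ℕ) (hn : 1 ≤ n) :
    (Finset.univ.filter
      (fun c : Fin (n+1) → Fin n => ∑ t, ((c t : ℕ) + 1) = n + 1)).card = 1 := by
  haveI : NeZero n := ⟨by omega⟩
  rw [Finset.card_eq_one]
  refine ⟨fun _ => 0, ?_⟩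
  ext c
  simp only [Finset.mem_filter, Finset.mem_univ, true_and, Finset.mem_singleton]
  constructor
  · intro h
    have h2 : ∑ t : Fin (n+1), ((c t : ℕ) + 1) = (∑ t : Fin (n+1), (c t : ℕ)) + (n+1) := by
      rw [Finset.sum_add_distrib]; simp
    have h3 : ∑ t : Fin (n+1), (c t : ℕ) = 0 := by omega
    funext t
    have := (Finset.sum_eq_zero_iff.mp h3) t (Finset.mem_univ t)
    exact Fin.ext (by simpa using this)
  · intro h; subst h; simp

theorem stmt_18 (n : ℕ) (hn : 1 ≤ n)
    (mul : (Fin n → ℝ) →ₗ[ℝ] (Fin n → ℝ) →ₗ[ℝ] (Fin n → ℝ))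
    (habel : ∀ a b, mul a b = mul b a)
    (hassoc : ∀ a b c, mul (mul a b) c = mul a (mul b c))
    (hnil : ∀ a, IsNilpotent (mul a : Module.End ℝ (Fin n → ℝ)))
    (H : Matrix (Fin n) (Fin n) ℝ) (hsymm : H.IsSymm)
    (hnd : ∀ u : Fin n → ℝ, (∀ v, u ⬝ᵥ H.mulVec v = 0) → u = 0)
    (hhess : ∀ a b c : Fin n → ℝ, a ⬝ᵥ H.mulVec (mul b c) = b ⬝ᵥ H.mulVec (mul a c))
    (lam : (Fin n → ℝ) → Matrix (Fin n) (Fin n) ℝ)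
    (hlam : ∀ x, lam x = LinearMap.toMatrix' (mul x))
    -- 𝒜 is not filiform: 𝒜ⁿ = 0
    (hnf : Apow mul n = ⊥) :
    (∀ x : Fin n → ℝ, (lam x) ^ (n - 1) = 0) ∧
    (fun x : Fin n → ℝ => x ⬝ᵥ
        (H * (∑ k ∈ Finset.range n, ((-1 : ℝ) ^ k * ((k : ℝ) + 2)⁻¹) • (lam x) ^ k)).mulVec x)
      ≠ cayleyPoly n := by
  -- Part 1
  have part1 : ∀ x : Fin n → ℝ, (lam x) ^ (n - 1) = 0 := by
    intro x
    have hend : (mul x : Module.End ℝ (Fin n → ℝ)) ^ (n - 1) = 0 := by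
      apply LinearMap.ext; intro w
      have hm := pow_mem_Apow mul x (n - 1) w
      rw [show n - 1 + 1 = n by omega, hnf] at hm
      simpa using hm
    have hx : lam x = LinearMap.toMatrixAlgEquiv' (mul x) := by rw [hlam]; rfl
    rw [hx, ← map_pow, hend, map_zero]
  refine ⟨part1, ?_⟩
  intro heq
  set v : Fin n → ℝ := fun _ => 1 with hv
  -- λ is homogeneous
  have hl : ∀ (t : ℝ) (w : Fin n → ℝ), lam (t • w) = t • lam w := by
    intro t w
    rw [hlam, hlam, mul.map_smul, LinearMap.toMatrix'.map_smul]
  -- polynomial coefficients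
  set a : ℕ → ℝ := fun k =>
    (-1 : ℝ) ^ k * ((k : ℝ) + 2)⁻¹ * (v ⬝ᵥ (H * (lam v) ^ k).mulVec v) with ha
  set b : ℕ → ℝ := fun d =>
    (-1 : ℝ) ^ d * (d : ℝ)⁻¹ *
      ((Finset.univ.filter
        (fun c : Fin d → Fin n => ∑ t, ((c t : ℕ) + 1) = n + 1)).card : ℝ) with hb
  set P : Polynomial ℝ :=
    ∑ k ∈ Finset.range n, Polynomial.C (a k) * Polynomial.X ^ (k + 2) with hP
  set Q : Polynomial ℝ :=
    ∑ d ∈ Finset.Icc 2 (n + 1), Polynomial.C (b d) * Polynomial.X ^ d with hQ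
  -- evaluation of the LHS along the line t • v
  have keyF : ∀ t : ℝ,
      (t • v) ⬝ᵥ (H * (∑ k ∈ Finset.range n,
          ((-1 : ℝ) ^ k * ((k : ℝ) + 2)⁻¹) • (lam (t • v)) ^ k)).mulVec (t • v)
      = P.eval t := by
    intro t
    rw [hl]
    simp only [smul_pow, smul_smul, Finset.mul_sum, Matrix.mul_smul]
    rw [dot_sum_mulVec]
    simp only [hP, Polynomial.eval_finset_sum, Polynomial.eval_mul, Polynomial.eval_C,
      Polynomial.eval_pow, Polynomial.eval_X, Matrix.smul_mulVec, Matrix.mulVec_smul,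
      dotProduct_smul, smul_dotProduct, smul_eq_mul, ha]
    apply Finset.sum_congr rfl
    intro k _
    ring
  -- evaluation of cayleyPoly along the line t • v
  have keyC : ∀ t : ℝ, cayleyPoly n (t • v) = Q.eval t := by
    intro t
    unfold cayleyPoly
    simp only [hQ, Polynomial.eval_finset_sum, Polynomial.eval_mul, Polynomial.eval_C,
      Polynomial.eval_pow, Polynomial.eval_X, hb]
    apply Finset.sum_congr rfl
    intro d _
    have hin : ∀ c : Fin d → Fin n, (∏ s, (t • v) (c s)) = t ^ d := by
      intro c
      simp [hv, Finset.prod_const]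
    rw [Finset.sum_congr rfl (fun c _ => hin c), Finset.sum_const, nsmul_eq_mul]
    ring
  -- the two polynomials agree
  have hPQ : P = Q := by
    apply Polynomial.funext
    intro t
    rw [← keyF t, ← keyC t]
    exact congrFun heq (t • v)
  -- compare coefficients at n + 1
  have hPc : P.coeff (n + 1) = 0 := by
    rw [hP, Polynomial.finset_sum_coeff]
    simp only [Polynomial.coeff_C_mul, Polynomial.coeff_X_pow]
    rw [Finset.sum_eq_single (n - 1)]
    · rw [if_pos (by omega)]
      have : lam v ^ (n - 1) = 0 := part1 v
      simp [ha, this]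
    · intro k hk hk'
      rw [if_neg (by simp at hk; omega), mul_zero]
    · intro hmem
      exfalso
      exact hmem (Finset.mem_range.mpr (by omega))
  have hQc : Q.coeff (n + 1) = b (n + 1) := by
    rw [hQ, Polynomial.finset_sum_coeff]
    simp only [Polynomial.coeff_C_mul, Polynomial.coeff_X_pow]
    rw [Finset.sum_eq_single (n + 1)]
    · rw [if_pos rfl, mul_one]
    · intro d hd hd'
      rw [if_neg (fun h => hd' h.symm), mul_zero]
    · intro hmem
      exfalso
      exact hmem (Finset.mem_Icc.mpr ⟨by omega, le_refl _⟩)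
  have hbtop : b (n + 1) ≠ 0 := by
    rw [hb]
    simp only [top_filter_card n hn, Nat.cast_one, mul_one]
    apply mul_ne_zero
    · exact pow_ne_zero _ (by norm_num)
    · rw [ne_eq, inv_eq_zero]
      push_cast
      positivity
  rw [hPQ, hQc] at hPc
  exact hbtop hPc
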